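/- arXiv:2411.07651 — 4 statements merged into one kernel-verified Lean document; each statement's English description precedes it below -/
import Mathlib

section
/- Let (Y_n) be a sequence of ℕ-valued random variables with natural filtration (G_n) such that P(Y_{n+1} = y | G_n) = p_{g_n}(y) = ∑_{j=1}^d k(y|ϑ_j) g_n(ϑ_j), where g_{n+1}(ϑ_j) = (1-α_{n+1}) g_n(ϑ_j) + α_{n+1} k(Y_{n+1}|ϑ_j) g_n(ϑ_j) / ∑_i k(Y_{n+1}|ϑ_i) g_n(ϑ_i) with α_n ∈ (0,1). Then for each j, (g_n(ϑ_j))_{n≥0} is a bounded martingale with respect to (G_n): E[g_{n+1}(ϑ_j) | G_n] = g_n(ϑ_j). -/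
open MeasureTheory

/-- The Poisson kernel `k(y|θ) = e^{-θ} θ^y / y!`. -/
noncomputable def poissonK (θ : ℝ) (y : ℕ) : ℝ :=
  Real.exp (-θ) * θ ^ y / (Nat.factorial y)

lemma poissonK_pos {θ : ℝ} (hθ : 0 < θ) (y : ℕ) : 0 < poissonK θ y := by
  unfold poissonK
  positivity

lemma poissonK_eq (θ : ℝ) (y : ℕ) : poissonK θ y = Real.exp (-θ) * (θ ^ y / y.factorial) := by
  unfold poissonK; ring

lemma poissonK_summable (θ : ℝ) : Summable (poissonK θ) := by
  rw [show poissonK θ = fun y : ℕ => Real.exp (-θ) * (θ ^ y / y.factorial) from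
    funext (poissonK_eq θ)]
  exact (Real.summable_pow_div_factorial θ).mul_left _

lemma poissonK_tsum (θ : ℝ) : ∑' y : ℕ, poissonK θ y = 1 := by
  simp_rw [poissonK_eq]
  rw [tsum_mul_left]
  have h : Real.exp θ = ∑' n : ℕ, θ ^ n / n.factorial := by
    have := congrFun Real.exp_eq_exp_ℝ θ
    rw [NormedSpace.exp_eq_tsum_div] at this
    exact this
  rw [← h, ← Real.exp_add]
  simp

/-- under Newton's algorithm, if the conditional law of `Y_{n+1}` given `𝒢_n`
is the mixture `p_{g_n}`, then for each grid point `ϑ_j` the sequence `(g_n(ϑ_j))` is a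
bounded martingale with respect to `(𝒢_n)`. -/
theorem newton_iterates_martingale
    {Ω : Type*} {m0 : MeasurableSpace Ω} (μ : Measure Ω) [IsProbabilityMeasure μ]
    (𝒢 : Filtration ℕ m0) (d : ℕ) (ϑ : Fin d → ℝ) (hϑ : ∀ j, 0 < ϑ j)
    (Y : ℕ → Ω → ℕ) (α : ℕ → ℝ) (hα : ∀ n, α n ∈ Set.Ioo (0 : ℝ) 1)
    (g : ℕ → Ω → Fin d → ℝ)
    (hadapt : ∀ n j, StronglyMeasurable[𝒢 n] (fun ω => g n ω j))
    (hpmf : ∀ n ω, (∀ j, 0 ≤ g n ω j) ∧ ∑ j, g n ω j = 1)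
    (hrec : ∀ n ω j, g (n + 1) ω j =
      (1 - α (n + 1)) * g n ω j +
        α (n + 1) * (poissonK (ϑ j) (Y (n + 1) ω) * g n ω j /
          ∑ i, poissonK (ϑ i) (Y (n + 1) ω) * g n ω i))
    (hcond : ∀ (n : ℕ) (y : ℕ),
      μ[(fun ω => if Y (n + 1) ω = y then (1 : ℝ) else 0) | 𝒢 n]
        =ᵐ[μ] fun ω => ∑ j, poissonK (ϑ j) y * g n ω j) :
    ∀ j, (∀ n ω, |g n ω j| ≤ 1) ∧ Martingale (fun n ω => g n ω j) 𝒢 μ := by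
  intro j
  -- basic bounds
  have hg0 : ∀ n ω (i : Fin d), 0 ≤ g n ω i := fun n ω => (hpmf n ω).1
  have hg1 : ∀ n ω, g n ω j ≤ 1 := by
    intro n ω
    calc g n ω j ≤ ∑ i, g n ω i :=
          Finset.single_le_sum (fun i _ => hg0 n ω i) (Finset.mem_univ j)
      _ = 1 := (hpmf n ω).2
  have hbound : ∀ n ω, |g n ω j| ≤ 1 := fun n ω =>
    abs_le.mpr ⟨by linarith [hg0 n ω j], hg1 n ω⟩
  -- integrability
  have hint : ∀ n, Integrable (fun ω => g n ω j) μ := by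
    intro n
    refine Integrable.mono' (integrable_const 1)
      ((hadapt n j).mono (𝒢.le n)).aestronglyMeasurable (ae_of_all _ fun ω => ?_)
    rw [Real.norm_eq_abs]; exact hbound n ω
  refine ⟨hbound, martingale_nat (fun n => hadapt n j) hint ?_⟩
  intro n
  -- notation
  set S : ℕ → Ω → ℝ := fun y ω => ∑ i, poissonK (ϑ i) y * g n ω i with hS
  set f : ℕ → Ω → ℝ := fun y ω => poissonK (ϑ j) y * g n ω j / S y ω with hf
  set I : ℕ → Ω → ℝ := fun y ω => if Y (n + 1) ω = y then (1 : ℝ) else 0 with hIdef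
  -- positivity of S
  have hSpos : ∀ y ω, 0 < S y ω := by
    intro y ω
    have hsum := (hpmf n ω).2
    have hex : ∃ i : Fin d, 0 < g n ω i := by
      by_contra h
      push_neg at h
      have : ∑ i, g n ω i = 0 := Finset.sum_eq_zero fun i _ =>
        le_antisymm (h i) (hg0 n ω i)
      rw [hsum] at this; norm_num at this
    obtain ⟨i, hi⟩ := hex
    refine Finset.sum_pos' (fun i _ => mul_nonneg (poissonK_pos (hϑ i) y).le (hg0 n ω i))
      ⟨i, Finset.mem_univ i, mul_pos (poissonK_pos (hϑ i) y) hi⟩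
  -- bounds on f
  have hf0 : ∀ y ω, 0 ≤ f y ω := fun y ω =>
    div_nonneg (mul_nonneg (poissonK_pos (hϑ j) y).le (hg0 n ω j)) (hSpos y ω).le
  have hf1 : ∀ y ω, f y ω ≤ 1 := by
    intro y ω
    rw [hf, div_le_one (hSpos y ω)]
    exact Finset.single_le_sum
      (fun i _ => mul_nonneg (poissonK_pos (hϑ i) y).le (hg0 n ω i)) (Finset.mem_univ j)
  have hfS : ∀ y ω, f y ω * S y ω = poissonK (ϑ j) y * g n ω j := fun y ω =>
    div_mul_cancel₀ _ (hSpos y ω).ne'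
  -- measurability of S and f w.r.t. 𝒢 n
  have hSmeas : ∀ y, StronglyMeasurable[𝒢 n] (fun ω => S y ω) := by
    intro y
    apply Measurable.stronglyMeasurable
    exact Finset.measurable_sum _ fun i _ => ((hadapt n i).measurable.const_mul _)
  have hfmeas : ∀ y, StronglyMeasurable[𝒢 n] (f y) := fun y =>
    (((hadapt n j).measurable.const_mul _).div (hSmeas y).measurable).stronglyMeasurable
  -- integrability of the indicators
  have hI : ∀ y, Integrable (I y) μ := by
    intro y
    by_contra h
    have h0 : μ[I y | 𝒢 n] = 0 := condExp_of_not_integrable h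
    have hAE := hcond n y
    rw [show (fun ω => if Y (n + 1) ω = y then (1 : ℝ) else 0) = I y from rfl, h0] at hAE
    have hne : μ ≠ 0 := IsProbabilityMeasure.ne_zero μ
    have hex : ∃ ω, (0 : Ω → ℝ) ω = S y ω := by
      haveI : (ae μ).NeBot := ae_neBot.mpr hne
      exact Filter.Eventually.exists hAE
    obtain ⟨ω, hω⟩ := hex
    simp only [Pi.zero_apply] at hω
    exact absurd hω.symm (hSpos y ω).ne' 
  have hIbd : ∀ y ω, ‖I y ω‖ ≤ 1 := by
    intro y ω
    rw [hIdef]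
    dsimp only
    split <;> simp
  -- conditional expectation of each term
  have hterm : ∀ y, μ[fun ω => f y ω * I y ω | 𝒢 n]
      =ᵐ[μ] fun ω => poissonK (ϑ j) y * g n ω j := by
    intro y
    have hint_fI : Integrable (f y * I y) μ := by
      refine Integrable.mono' (integrable_const 1)
        (((hfmeas y).mono (𝒢.le n)).aestronglyMeasurable.mul (hI y).1)
        (ae_of_all _ fun ω => ?_)
      rw [Pi.mul_apply, norm_mul]
      calc ‖f y ω‖ * ‖I y ω‖ ≤ 1 * 1 := by
            refine mul_le_mul ?_ (hIbd y ω) (norm_nonneg _) zero_le_one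
            rw [Real.norm_eq_abs, abs_le]
            exact ⟨by linarith [hf0 y ω], hf1 y ω⟩
        _ = 1 := one_mul 1
    have h1 : μ[f y * I y | 𝒢 n] =ᵐ[μ] f y * μ[I y | 𝒢 n] :=
      condExp_mul_of_stronglyMeasurable_left (hfmeas y) hint_fI (hI y)
    have h2 : f y * μ[I y | 𝒢 n] =ᵐ[μ] fun ω => f y ω * S y ω := by
      filter_upwards [hcond n y] with ω hω
      rw [Pi.mul_apply]
      congr 1
    refine h1.trans (h2.trans ?_)
    filter_upwards with ω
    exact hfS y ω
  -- the set-integral identity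
  have key : (fun ω => g n ω j) =ᵐ[μ] μ[fun ω => g (n + 1) ω j | 𝒢 n] := by
    haveI : SigmaFinite (μ.trim (𝒢.le n)) := by infer_instance
    refine ae_eq_condExp_of_forall_setIntegral_eq (𝒢.le n) (hint (n + 1))
      (fun s _ _ => (hint n).integrableOn) (fun s hs hμs => ?_)
      (StronglyMeasurable.aestronglyMeasurable (hadapt n j))
    have hsm0 : MeasurableSet s := 𝒢.le n s hs
    -- F y = f y * I y
    have hF_int : ∀ y : ℕ, Integrable (fun ω => f y ω * I y ω) (μ.restrict s) := by
      intro y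
      refine Integrable.mono' (integrable_const 1)
        ((((hfmeas y).mono (𝒢.le n)).aestronglyMeasurable.mul (hI y).1).restrict)
        (ae_of_all _ fun ω => ?_)
      rw [norm_mul]
      calc ‖f y ω‖ * ‖I y ω‖ ≤ 1 * 1 := by
            refine mul_le_mul ?_ (hIbd y ω) (norm_nonneg _) zero_le_one
            rw [Real.norm_eq_abs, abs_le]
            exact ⟨by linarith [hf0 y ω], hf1 y ω⟩
        _ = 1 := one_mul 1
    -- each term's integral over s
    have hterm_int : ∀ y : ℕ, ∫ ω in s, f y ω * I y ω ∂μ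
        = poissonK (ϑ j) y * ∫ ω in s, g n ω j ∂μ := by
      intro y
      have hint_fI : Integrable (fun ω => f y ω * I y ω) μ := by
        refine Integrable.mono' (integrable_const 1)
          (((hfmeas y).mono (𝒢.le n)).aestronglyMeasurable.mul (hI y).1)
          (ae_of_all _ fun ω => ?_)
        rw [norm_mul]
        calc ‖f y ω‖ * ‖I y ω‖ ≤ 1 * 1 := by
              refine mul_le_mul ?_ (hIbd y ω) (norm_nonneg _) zero_le_one
              rw [Real.norm_eq_abs, abs_le]
              exact ⟨by linarith [hf0 y ω], hf1 y ω⟩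
          _ = 1 := one_mul 1
      calc ∫ ω in s, f y ω * I y ω ∂μ
          = ∫ ω in s, (μ[fun ω => f y ω * I y ω | 𝒢 n]) ω ∂μ :=
            (setIntegral_condExp (𝒢.le n) hint_fI hs).symm
        _ = ∫ ω in s, poissonK (ϑ j) y * g n ω j ∂μ := by
            apply setIntegral_congr_ae hsm0
            filter_upwards [hterm y] with ω hω _
            exact hω
        _ = poissonK (ϑ j) y * ∫ ω in s, g n ω j ∂μ := by
            rw [integral_const_mul]
    -- pointwise tsum identity
    have hpt : ∀ ω, ∑' y : ℕ, f y ω * I y ω = f (Y (n + 1) ω) ω := by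
      intro ω
      rw [tsum_eq_single (Y (n + 1) ω)]
      · rw [hIdef]; simp
      · intro y hy
        have : I y ω = 0 := by rw [hIdef]; simp [Ne.symm hy]
        rw [this, mul_zero]
    -- summability of norms of integrals
    have hnorm_sum : Summable fun y : ℕ => ∫ ω in s, ‖f y ω * I y ω‖ ∂μ := by
      have heq : ∀ y : ℕ, ∫ ω in s, ‖f y ω * I y ω‖ ∂μ
          = poissonK (ϑ j) y * ∫ ω in s, g n ω j ∂μ := by
        intro y
        rw [← hterm_int y]
        congr 1
        funext ω
        rw [Real.norm_eq_abs, abs_of_nonneg]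
        refine mul_nonneg (hf0 y ω) ?_
        rw [hIdef]; dsimp only; split <;> norm_num
      simp_rw [heq]
      exact (poissonK_summable (ϑ j)).mul_right _
    have hswap := integral_tsum_of_summable_integral_norm hF_int hnorm_sum
    have hYint : ∫ ω in s, f (Y (n + 1) ω) ω ∂μ = ∫ ω in s, g n ω j ∂μ := by
      rw [← integral_congr_ae (ae_of_all _ fun ω => (hpt ω)), ← hswap]
      simp_rw [hterm_int]
      rw [tsum_mul_right, poissonK_tsum, one_mul]
    -- conclude
    have hrw : ∀ ω, g (n + 1) ω j
        = (1 - α (n + 1)) * g n ω j + α (n + 1) * f (Y (n + 1) ω) ω := by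
      intro ω
      rw [hrec n ω j]
    have hint_fY : Integrable (fun ω => f (Y (n + 1) ω) ω) μ := by
      have : (fun ω => f (Y (n + 1) ω) ω)
          = fun ω => (g (n + 1) ω j - (1 - α (n + 1)) * g n ω j) / α (n + 1) := by
        funext ω
        rw [hrw ω]
        field_simp
        rw [add_sub_cancel_left, mul_div_cancel_right₀ _ (hα (n + 1)).1.ne']
      rw [this]
      exact (((hint (n + 1)).sub ((hint n).const_mul _)).div_const _)
    calc ∫ ω in s, g n ω j ∂μ
        = (1 - α (n + 1)) * ∫ ω in s, g n ω j ∂μ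
          + α (n + 1) * ∫ ω in s, f (Y (n + 1) ω) ω ∂μ := by
          rw [hYint]; ring
      _ = ∫ ω in s, ((1 - α (n + 1)) * g n ω j + α (n + 1) * f (Y (n + 1) ω) ω) ∂μ := by
          rw [integral_add (((hint n).restrict).const_mul _) ((hint_fY.restrict).const_mul _),
            integral_const_mul, integral_const_mul]
      _ = ∫ ω in s, g (n + 1) ω j ∂μ := by
          apply setIntegral_congr_ae hsm0
          filter_upwards with ω _
          exact (hrw ω).symm
  exact key
end

section
/- Under the learning model of Newton's algorithm (g_n a (G_n)-martingale taking values in probability mass functions on the finite grid Θ_d, with P(Y_{n+1}=y|G_n)=p_{g_n}(y)), the sequence of marginal mixture probabilities (p_{g_n}(y))_{n≥0} is also a bounded martingale for each fixed y ∈ ℕ, and consequently P(Y_{n+k}=y | G_n) = p_{g_n}(y) for all n ≥ 0 and k ≥ 1; in particular, the sequence (Y_n) is conditionally identically distributed. -/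
open MeasureTheory

/-- under the quasi-Bayes learning model (the random pmfs `g_n` on the finite
grid form a martingale, and `P(Y_{n+1}=y | 𝒢_n) = p_{g_n}(y)`), the marginal mixture
probabilities `(p_{g_n}(y))` form a bounded martingale for each `y`, and
`P(Y_{n+k}=y | 𝒢_n) = p_{g_n}(y)` for all `n ≥ 0`, `k ≥ 1`; in particular `(Y_n)` is
conditionally identically distributed. -/
theorem quasiBayes_cid
    {Ω : Type*} {m0 : MeasurableSpace Ω} (μ : Measure Ω) [IsProbabilityMeasure μ]
    (𝒢 : Filtration ℕ m0) (d : ℕ) (ϑ : Fin d → ℝ) (hϑ : ∀ j, 0 < ϑ j)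
    (Y : ℕ → Ω → ℕ)
    (g : ℕ → Ω → Fin d → ℝ)
    (hadapt : ∀ n j, StronglyMeasurable[𝒢 n] (fun ω => g n ω j))
    (hpmf : ∀ n ω, (∀ j, 0 ≤ g n ω j) ∧ ∑ j, g n ω j = 1)
    (hmart : ∀ j, Martingale (fun n ω => g n ω j) 𝒢 μ)
    (hcond : ∀ (n : ℕ) (y : ℕ),
      μ[(fun ω => if Y (n + 1) ω = y then (1 : ℝ) else 0) | 𝒢 n]
        =ᵐ[μ] fun ω => ∑ j, poissonK (ϑ j) y * g n ω j) :
    (∀ y : ℕ, (∀ n ω, |∑ j, poissonK (ϑ j) y * g n ω j| ≤ 1) ∧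
        Martingale (fun n ω => ∑ j, poissonK (ϑ j) y * g n ω j) 𝒢 μ) ∧
    (∀ (n k : ℕ) (y : ℕ), 1 ≤ k →
      μ[(fun ω => if Y (n + k) ω = y then (1 : ℝ) else 0) | 𝒢 n]
        =ᵐ[μ] fun ω => ∑ j, poissonK (ϑ j) y * g n ω j) ∧
    (∀ (n k : ℕ) (y : ℕ), 1 ≤ k →
      μ[(fun ω => if Y (n + k) ω = y then (1 : ℝ) else 0) | 𝒢 n]
        =ᵐ[μ] μ[(fun ω => if Y (n + 1) ω = y then (1 : ℝ) else 0) | 𝒢 n]) := by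
  -- kernel bounds
  have hk0 : ∀ (j : Fin d) (y : ℕ), 0 ≤ poissonK (ϑ j) y := by
    intro j y
    have := (hϑ j).le
    unfold poissonK
    positivity
  have hk1 : ∀ (j : Fin d) (y : ℕ), poissonK (ϑ j) y ≤ 1 := by
    intro j y
    have hθ := (hϑ j).le
    have h1 : (ϑ j) ^ y / (Nat.factorial y : ℝ) ≤ Real.exp (ϑ j) :=
      Real.pow_div_factorial_le_exp _ hθ y
    have h2 : Real.exp (-ϑ j) * ((ϑ j) ^ y / (Nat.factorial y : ℝ))
        ≤ Real.exp (-ϑ j) * Real.exp (ϑ j) :=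
      mul_le_mul_of_nonneg_left h1 (Real.exp_nonneg _)
    have h3 : Real.exp (-ϑ j) * Real.exp (ϑ j) = 1 := by
      rw [← Real.exp_add]; simp
    unfold poissonK
    rw [mul_div_assoc]
    linarith
  have hint : ∀ n j, Integrable (fun ω => g n ω j) μ := fun n j => (hmart j).integrable n
  -- key conditional expectation computation for the mixture
  have hsum_eq : ∀ (y : ℕ) (t : ℕ), (fun ω => ∑ j, poissonK (ϑ j) y * g t ω j)
      = ∑ j : Fin d, fun ω => poissonK (ϑ j) y * g t ω j := by
    intro y t; ext ω; simp [Finset.sum_apply]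
  have hcesum : ∀ (s t : ℕ), s ≤ t → ∀ y : ℕ,
      μ[(fun ω => ∑ j, poissonK (ϑ j) y * g t ω j) | 𝒢 s]
        =ᵐ[μ] fun ω => ∑ j, poissonK (ϑ j) y * g s ω j := by
    intro s t hst y
    rw [hsum_eq y t]
    have h1 := condExp_finsetSum (m := 𝒢 s) (μ := μ) (s := Finset.univ)
      (f := fun j : Fin d => fun ω => poissonK (ϑ j) y * g t ω j)
      (fun j _ => (hint t j).const_mul _)
    refine h1.trans ?_
    have hterm : ∀ j : Fin d,
        μ[(fun ω => poissonK (ϑ j) y * g t ω j) | 𝒢 s]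
          =ᵐ[μ] fun ω => poissonK (ϑ j) y * g s ω j := by
      intro j
      have h2 : (fun ω => poissonK (ϑ j) y * g t ω j)
          = poissonK (ϑ j) y • (fun ω => g t ω j) := rfl
      rw [h2]
      refine (condExp_smul (poissonK (ϑ j) y) (fun ω => g t ω j) (𝒢 s)).trans ?_
      filter_upwards [(hmart j).condExp_ae_eq hst] with ω hω
      simp [hω]
    have hall : ∀ᵐ ω ∂μ, ∀ j : Fin d,
        (μ[(fun ω => poissonK (ϑ j) y * g t ω j) | 𝒢 s]) ω
          = poissonK (ϑ j) y * g s ω j := by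
      rw [ae_all_iff]; exact hterm
    filter_upwards [hall] with ω hω
    simp only [Finset.sum_apply]
    exact Finset.sum_congr rfl fun j _ => hω j
  -- the mixture martingale
  have hM : ∀ y : ℕ, Martingale (fun n ω => ∑ j, poissonK (ϑ j) y * g n ω j) 𝒢 μ := by
    intro y
    constructor
    · intro n
      have he : ((fun n ω => ∑ j, poissonK (ϑ j) y * g n ω j) n)
          = ∑ j : Fin d, fun ω => poissonK (ϑ j) y * g n ω j := by
        ext ω; simp [Finset.sum_apply]
      rw [he]
      exact Finset.stronglyMeasurable_sum _ fun j _ => (hadapt n j).const_mul _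
    · intro i j hij
      exact hcesum i j hij y
  -- part 2
  have hpart2 : ∀ (n k : ℕ) (y : ℕ), 1 ≤ k →
      μ[(fun ω => if Y (n + k) ω = y then (1 : ℝ) else 0) | 𝒢 n]
        =ᵐ[μ] fun ω => ∑ j, poissonK (ϑ j) y * g n ω j := by
    intro n k y hk
    obtain ⟨k', rfl⟩ : ∃ k', k = k' + 1 := ⟨k - 1, by omega⟩
    have hnm : n ≤ n + k' := Nat.le_add_right n k'
    have htower := condExp_condExp_of_le (μ := μ)
      (f := fun ω => if Y (n + (k' + 1)) ω = y then (1 : ℝ) else 0)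
      (𝒢.mono hnm) (𝒢.le (n + k'))
    refine htower.symm.trans ?_
    have hc : (n + k') + 1 = n + (k' + 1) := by omega
    have h1 : μ[(fun ω => if Y (n + (k' + 1)) ω = y then (1 : ℝ) else 0) | 𝒢 (n + k')]
        =ᵐ[μ] fun ω => ∑ j, poissonK (ϑ j) y * g (n + k') ω j := by
      rw [← hc]; exact hcond (n + k') y
    refine (condExp_congr_ae (m := 𝒢 n) h1).trans ?_
    exact hcesum n (n + k') hnm y
  refine ⟨?_, hpart2, ?_⟩
  · intro y
    refine ⟨?_, hM y⟩
    intro n ω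
    have hg := hpmf n ω
    have hnn : 0 ≤ ∑ j, poissonK (ϑ j) y * g n ω j :=
      Finset.sum_nonneg fun j _ => mul_nonneg (hk0 j y) (hg.1 j)
    rw [abs_of_nonneg hnn]
    calc ∑ j, poissonK (ϑ j) y * g n ω j ≤ ∑ j, g n ω j := by
          refine Finset.sum_le_sum fun j _ => ?_
          nlinarith [hk1 j y, hk0 j y, hg.1 j]
      _ = 1 := hg.2
  · intro n k y hk
    exact (hpart2 n k y hk).trans (hcond n y).symm
end

section
/- (Conditional delta method, error control step) Under the assumptions of the delta method theorem above—r_n(g_n − g̃) converges in the almost-sure conditional sense to a P-a.s. tight kernel K, and h uniformly differentiable—for every ε > 0, the conditional probability P(‖r_n(h(g_n) − h(g̃)) − r_n Dh_{g̃}(g_n − g̃)‖ > ε | G_n) converges to 0 almost surely as n → ∞. -/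
open MeasureTheory ProbabilityTheory Filter
open scoped ENNReal

/-- error control step of the conditional delta method: under the
assumptions of the conditional delta method, for every `ε > 0` the conditional probability
`P(‖r_n(h(g_n) − h(g̃)) − r_n Dh_{g̃}(g_n − g̃)‖ > ε | 𝒢_n)` converges to `0` a.s. -/
theorem conditional_delta_method_error_control
    {Ω : Type*} [m0 : MeasurableSpace Ω] [StandardBorelSpace Ω] [Nonempty Ω]
    (μ : Measure Ω) [IsProbabilityMeasure μ] (𝒢 : Filtration ℕ m0)
    (d p : ℕ) (Δ : Set (Fin d → ℝ)) (hΔ : Convex ℝ Δ)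
    (g : ℕ → Ω → Fin d → ℝ) (gt : Ω → Fin d → ℝ)
    (hgmeas : ∀ n, Measurable (g n)) (hgtmeas : Measurable gt)
    (hgΔ : ∀ n ω, g n ω ∈ Δ) (hgtΔ : ∀ ω, gt ω ∈ Δ)
    (r : ℕ → ℝ) (hrpos : ∀ n, 0 < r n) (hrmono : Monotone r)
    (hrtop : Tendsto r atTop atTop)
    (K : Ω → Measure (Fin d → ℝ)) (hK : ∀ ω, IsProbabilityMeasure (K ω))
    (hKtight : ∀ᵐ ω ∂μ, ∀ η > (0 : ℝ≥0∞), ∃ M : ℝ,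
      K ω {x | ∃ i, M < |x i|} < η)
    (hconv : ∀ᵐ ω ∂μ, ∀ f : BoundedContinuousFunction (Fin d → ℝ) ℝ,
      Tendsto (fun n =>
          ∫ x, f x ∂((condExpKernel μ (𝒢 n) ω).map (fun ω' => r n • (g n ω' - gt ω'))))
        atTop (nhds (∫ x, f x ∂(K ω))))
    (h : (Fin d → ℝ) → (Fin p → ℝ))
    (Dh : (Fin d → ℝ) → ((Fin d → ℝ) →L[ℝ] (Fin p → ℝ)))
    (hunif : ∀ ε > (0 : ℝ), ∃ δ > (0 : ℝ), ∀ gs ∈ Δ, ∀ x ∈ Δ, x ≠ gs →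
      ‖x - gs‖ < δ → ‖h x - h gs - Dh gs (x - gs)‖ < ε * ‖x - gs‖) :
    ∀ ε > (0 : ℝ), ∀ᵐ ω ∂μ,
      Tendsto (fun n =>
          (condExpKernel μ (𝒢 n) ω)
            {ω' | ε < ‖r n • (h (g n ω') - h (gt ω'))
                        - r n • (Dh (gt ω') (g n ω' - gt ω'))‖})
        atTop (nhds 0) := by
  intro ε hε
  filter_upwards [hKtight, hconv] with ω htight hc
  have hφmeas : ∀ n, Measurable (fun ω' => r n • (g n ω' - gt ω')) :=
    fun n => ((hgmeas n).sub hgtmeas).const_smul (r n)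
  haveI := hK ω
  -- pushforward probability measures
  let ν : ℕ → ProbabilityMeasure (Fin d → ℝ) := fun n =>
    ⟨(condExpKernel μ (𝒢 n) ω).map (fun ω' => r n • (g n ω' - gt ω')),
      Measure.isProbabilityMeasure_map (hφmeas n).aemeasurable⟩
  have hν : Tendsto ν atTop (nhds ⟨K ω, hK ω⟩) :=
    ProbabilityMeasure.tendsto_iff_forall_integral_tendsto.mpr hc
  rw [ENNReal.tendsto_nhds_zero]
  intro η hη
  obtain ⟨M₀, hM₀⟩ := htight η hη
  set M : ℝ := max M₀ 0 + 1 with hMdef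
  have hMpos : (0 : ℝ) < M := by positivity
  have hM₀M : M₀ < M := lt_of_le_of_lt (le_max_left _ _) (lt_add_one _)
  -- the closed set F
  set F : Set (Fin d → ℝ) := {x | M ≤ ‖x‖} with hFdef
  have hFclosed : IsClosed F := isClosed_le continuous_const continuous_norm
  have hFsub : F ⊆ {x | ∃ i, M₀ < |x i|} := by
    intro x hx
    by_contra hcon
    simp only [Set.mem_setOf_eq, not_exists, not_lt] at hcon
    have hle : ‖x‖ ≤ max M₀ 0 := by
      refine pi_norm_le_iff_of_nonneg (le_max_right _ _) |>.mpr fun i => ?_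
      rw [Real.norm_eq_abs]
      exact le_trans (hcon i) (le_max_left _ _)
    have hxM : M ≤ ‖x‖ := hx
    have : ‖x‖ < M := lt_of_le_of_lt hle (lt_add_one _)
    linarith
  have hKF : K ω F < η := lt_of_le_of_lt (measure_mono hFsub) hM₀
  -- portmanteau
  have hlimsup : atTop.limsup (fun n => (ν n : Measure (Fin d → ℝ)) F) ≤ K ω F :=
    ProbabilityMeasure.limsup_measure_closed_le_of_tendsto hν hFclosed
  have hev1 : ∀ᶠ n in atTop, (ν n : Measure (Fin d → ℝ)) F < η :=
    eventually_lt_of_limsup_lt (lt_of_le_of_lt hlimsup hKF)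
  -- choose δ from uniform differentiability with ε' = ε / M
  obtain ⟨δ, hδpos, hδ⟩ := hunif (ε / M) (div_pos hε hMpos)
  have hev2 : ∀ᶠ n in atTop, M / δ < r n := hrtop.eventually_gt_atTop (M / δ)
  filter_upwards [hev1, hev2] with n hn1 hn2
  -- pointwise inclusion of events
  have hsub : {ω' | ε < ‖r n • (h (g n ω') - h (gt ω'))
        - r n • (Dh (gt ω') (g n ω' - gt ω'))‖}
      ⊆ (fun ω' => r n • (g n ω' - gt ω')) ⁻¹' F := by
    intro ω' hω'
    simp only [Set.mem_setOf_eq] at hω'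
    by_contra hcon
    simp only [Set.mem_preimage, hFdef, Set.mem_setOf_eq, not_le] at hcon
    -- so ‖r n • (g n ω' - gt ω')‖ < M ; show error ≤ ε, contradiction
    set x := g n ω'
    set gs := gt ω'
    have hrn := hrpos n
    have hnorm : ‖r n • (x - gs)‖ = r n * ‖x - gs‖ := by
      rw [norm_smul, Real.norm_eq_abs, abs_of_pos hrn]
    have herr : ‖r n • (h x - h gs) - r n • (Dh gs (x - gs))‖
        = r n * ‖h x - h gs - Dh gs (x - gs)‖ := by
      rw [← smul_sub, norm_smul, Real.norm_eq_abs, abs_of_pos hrn]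
    rcases eq_or_ne x gs with hxgs | hxgs
    · apply absurd hω'
      rw [herr, hxgs]
      simp [not_lt, le_of_lt hε]
    · have hdist : ‖x - gs‖ < δ := by
        have h1 : r n * ‖x - gs‖ < M := by rw [← hnorm]; exact hcon
        have h2 : M / δ < r n := hn2
        by_contra hge
        push_neg at hge
        have : M < r n * ‖x - gs‖ := by
          calc M = M / δ * δ := (div_mul_cancel₀ M (ne_of_gt hδpos)).symm
            _ < r n * δ := mul_lt_mul_of_pos_right h2 hδpos
            _ ≤ r n * ‖x - gs‖ := mul_le_mul_of_nonneg_left hge (le_of_lt hrn)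
        linarith
      have hkey := hδ gs (hgtΔ ω') x (hgΔ n ω') hxgs hdist
      apply absurd hω'
      rw [herr, not_lt]
      calc r n * ‖h x - h gs - Dh gs (x - gs)‖
          ≤ r n * (ε / M * ‖x - gs‖) := by
            exact mul_le_mul_of_nonneg_left (le_of_lt hkey) (le_of_lt hrn)
        _ = ε / M * (r n * ‖x - gs‖) := by ring
        _ ≤ ε / M * M := by
            refine mul_le_mul_of_nonneg_left ?_ (le_of_lt (div_pos hε hMpos))
            rw [← hnorm]; exact le_of_lt hcon
        _ = ε := div_mul_cancel₀ ε (ne_of_gt hMpos)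
  calc (condExpKernel μ (𝒢 n) ω)
        {ω' | ε < ‖r n • (h (g n ω') - h (gt ω'))
            - r n • (Dh (gt ω') (g n ω' - gt ω'))‖}
      ≤ (condExpKernel μ (𝒢 n) ω) ((fun ω' => r n • (g n ω' - gt ω')) ⁻¹' F) :=
        measure_mono hsub
    _ = (ν n : Measure (Fin d → ℝ)) F := by
        exact (Measure.map_apply (hφmeas n) hFclosed.measurableSet).symm
    _ ≤ η := le_of_lt hn1
end

section
/- (Regret dominated by squared Euclidean distance) Let Θ_η = {ϑ_1 < ⋯ < ϑ_{d_η}} ⊂ (0,∞), let g and g' be probability mass functions on Θ_η with g'(ϑ_i) > 0 for all i, and let G* be a probability measure on (0,∞) with ∫ e^{θ(d_η²−1)} dG*(θ) < ∞ (where we assume ϑ_{d_η}/ϑ_1 ≤ d_η). Then ∑_{y∈ℕ} (θ̂_g(y) − θ̂_{g'}(y))² p_{G*}(y) ≤ C ‖g − g'‖², where C = 4 d_η ϑ_{d_η}² e^{2(ϑ_{d_η}−ϑ_1)} ∫ e^{θ(d_η²−1)} dG*(θ) and ‖·‖ is the Euclidean norm on ℝ^{d_η}. -/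
open MeasureTheory
open scoped ENNReal

/-- The Poisson mixture mass function of a measure `G` on `(0,∞)`. -/
noncomputable def pmix (G : Measure ℝ) (y : ℕ) : ℝ :=
  (∫⁻ θ, ENNReal.ofReal (poissonK θ y) ∂G).toReal

/-- The empirical Bayes estimate `θ̂_g(y) = (y+1) p_g(y+1)/p_g(y)` for a pmf `g` on a
finite grid `ϑ`. -/
noncomputable def thetaHat {d : ℕ} (ϑ : Fin d → ℝ) (g : Fin d → ℝ) (y : ℕ) : ℝ :=
  ((y : ℝ) + 1) * (∑ i, poissonK (ϑ i) (y + 1) * g i) / (∑ i, poissonK (ϑ i) y * g i)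

lemma poissonK_succ (θ : ℝ) (y : ℕ) :
    ((y : ℝ) + 1) * poissonK θ (y + 1) = θ * poissonK θ y := by
  unfold poissonK
  rw [Nat.factorial_succ]
  have h : ((y:ℝ) + 1) ≠ 0 := by positivity
  have h2 : (Nat.factorial y : ℝ) ≠ 0 := by positivity
  push_cast
  field_simp
  ring

lemma poissonK_lb {a b θ : ℝ} (ha : 0 < a) (hab : a ≤ θ) (hb : θ ≤ b) (y : ℕ) :
    Real.exp (-b) * a ^ y / (Nat.factorial y) ≤ poissonK θ y := by
  unfold poissonK
  gcongr

lemma poissonK_ub {a b θ : ℝ} (ha : 0 < a) (hab : a ≤ θ) (hb : θ ≤ b) (y : ℕ) :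
    poissonK θ y ≤ Real.exp (-a) * b ^ y / (Nat.factorial y) := by
  have hθ : 0 < θ := lt_of_lt_of_le ha hab
  unfold poissonK
  gcongr <;> first | positivity | linarith

lemma thetaHat_eq {d : ℕ} (ϑ : Fin d → ℝ) (g : Fin d → ℝ) (y : ℕ) :
    thetaHat ϑ g y =
      (∑ i, ϑ i * poissonK (ϑ i) y * g i) / (∑ i, poissonK (ϑ i) y * g i) := by
  unfold thetaHat
  congr 1
  rw [Finset.mul_sum]
  refine Finset.sum_congr rfl fun i _ => ?_
  rw [← mul_assoc, poissonK_succ]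

set_option maxHeartbeats 1600000 in
lemma diff_sq_le (m : ℕ) (ϑ : Fin (m + 1) → ℝ) (hpos : ∀ i, 0 < ϑ i) (hmono : StrictMono ϑ)
    (g g' : Fin (m + 1) → ℝ) (hg0 : ∀ i, 0 ≤ g i) (hg1 : ∑ i, g i = 1)
    (hg'0 : ∀ i, 0 < g' i) (hg'1 : ∑ i, g' i = 1)
    (hratio : ϑ (Fin.last m) / ϑ 0 ≤ ((m : ℝ) + 1)) (y : ℕ) :
    (thetaHat ϑ g y - thetaHat ϑ g' y) ^ 2 ≤
      4 * ((m:ℝ)+1) * (ϑ (Fin.last m))^2 * Real.exp (2 * (ϑ (Fin.last m) - ϑ 0)) *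
        (∑ i, (g i - g' i)^2) * ((((m:ℝ)+1)^2)^y) := by
  set D : ℝ := (m:ℝ) + 1 with hD
  set a : ℝ := ϑ 0 with ha'
  set b : ℝ := ϑ (Fin.last m) with hb'
  have ha : 0 < a := hpos 0
  have hb : 0 < b := hpos _
  have hmemL : ∀ i, a ≤ ϑ i := fun i => hmono.monotone (Fin.zero_le i)
  have hmemU : ∀ i, ϑ i ≤ b := fun i => hmono.monotone (Fin.le_last i)
  have hab : a ≤ b := hmemL _
  set k : Fin (m+1) → ℝ := fun i => poissonK (ϑ i) y with hk
  set L : ℝ := Real.exp (-b) * a ^ y / (Nat.factorial y) with hL'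
  set U : ℝ := Real.exp (-a) * b ^ y / (Nat.factorial y) with hU'
  have hL : 0 < L := by rw [hL']; positivity
  have hkL : ∀ i, L ≤ k i := fun i => poissonK_lb ha (hmemL i) (hmemU i) y
  have hkU : ∀ i, k i ≤ U := fun i => poissonK_ub ha (hmemL i) (hmemU i) y
  have hk0 : ∀ i, 0 ≤ k i := fun i => hL.le.trans (hkL i)
  have hU0 : 0 < U := hL.trans_le ((hkL 0).trans (hkU 0))
  set P : ℝ := ∑ i, k i * g i with hP'
  set Q : ℝ := ∑ i, k i * g' i with hQ'
  set u : ℝ := ∑ i, ϑ i * k i * g i with hu'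
  set v : ℝ := ∑ i, ϑ i * k i * g' i with hv'
  set S : ℝ := ∑ i, (g i - g' i)^2 with hS'
  have hS0 : 0 ≤ S := Finset.sum_nonneg fun i _ => sq_nonneg _
  have hPL : L ≤ P := by
    calc L = ∑ i, L * g i := by rw [← Finset.mul_sum, hg1, mul_one]
    _ ≤ P := Finset.sum_le_sum fun i _ => mul_le_mul_of_nonneg_right (hkL i) (hg0 i)
  have hQL : L ≤ Q := by
    calc L = ∑ i, L * g' i := by rw [← Finset.mul_sum, hg'1, mul_one]
    _ ≤ Q := Finset.sum_le_sum fun i _ => mul_le_mul_of_nonneg_right (hkL i) (hg'0 i).le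
  have hP : 0 < P := hL.trans_le hPL
  have hQ : 0 < Q := hL.trans_le hQL
  have hTg : thetaHat ϑ g y = u / P := thetaHat_eq ϑ g y
  have hTg' : thetaHat ϑ g' y = v / Q := thetaHat_eq ϑ g' y
  clear_value D a b k L U P Q u v S
  -- Cauchy-Schwarz bounds
  have hsum1 : ∑ i, (ϑ i * k i)^2 ≤ D * (b * U)^2 := by
    calc ∑ i, (ϑ i * k i)^2 ≤ ∑ _i : Fin (m+1), (b*U)^2 :=
          Finset.sum_le_sum fun i _ => by
            have h1 : 0 ≤ ϑ i * k i := mul_nonneg (hpos i).le (hk0 i)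
            have h2 : ϑ i * k i ≤ b * U :=
              mul_le_mul (hmemU i) (hkU i) (hk0 i) hb.le
            exact pow_le_pow_left₀ h1 h2 2
    _ = D * (b*U)^2 := by
      rw [Finset.sum_const, Finset.card_univ, Fintype.card_fin]
      rw [nsmul_eq_mul, hD]
      push_cast
      ring
  have hsum2 : ∑ i, (k i)^2 ≤ D * U^2 := by
    calc ∑ i, (k i)^2 ≤ ∑ _i : Fin (m+1), U^2 :=
          Finset.sum_le_sum fun i _ => pow_le_pow_left₀ (hk0 i) (hkU i) 2
    _ = D * U^2 := by
      rw [Finset.sum_const, Finset.card_univ, Fintype.card_fin]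
      rw [nsmul_eq_mul, hD]
      push_cast
      ring
  have hCS1 : (u - v)^2 ≤ D * (b*U)^2 * S := by
    have huv : u - v = ∑ i, (ϑ i * k i) * (g i - g' i) := by
      rw [hu', hv', ← Finset.sum_sub_distrib]
      exact Finset.sum_congr rfl fun i _ => by ring
    rw [huv, hS']
    calc (∑ i, (ϑ i * k i) * (g i - g' i))^2
        ≤ (∑ i, (ϑ i * k i)^2) * (∑ i, (g i - g' i)^2) :=
          Finset.sum_mul_sq_le_sq_mul_sq _ _ _
    _ ≤ D * (b*U)^2 * ∑ i, (g i - g' i)^2 :=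
          mul_le_mul_of_nonneg_right hsum1 (Finset.sum_nonneg fun i _ => sq_nonneg _)
  have hCS2 : (Q - P)^2 ≤ D * U^2 * S := by
    have hqp : Q - P = ∑ i, k i * (g' i - g i) := by
      rw [hP', hQ', ← Finset.sum_sub_distrib]
      exact Finset.sum_congr rfl fun i _ => by ring
    have hsum' : ∑ i, (g' i - g i)^2 = S := by
      rw [hS']; exact Finset.sum_congr rfl fun i _ => by ring
    rw [hqp]
    calc (∑ i, k i * (g' i - g i))^2
        ≤ (∑ i, (k i)^2) * (∑ i, (g' i - g i)^2) :=
          Finset.sum_mul_sq_le_sq_mul_sq _ _ _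
    _ = (∑ i, (k i)^2) * S := by rw [hsum']
    _ ≤ D * U^2 * S := mul_le_mul_of_nonneg_right hsum2 hS0
  have hv0 : 0 ≤ v := by
    rw [hv']
    exact Finset.sum_nonneg fun i _ => mul_nonneg (mul_nonneg (hpos i).le (hk0 i)) (hg'0 i).le
  have hvQ : v ≤ b * Q := by
    rw [hv', hQ', Finset.mul_sum]
    refine Finset.sum_le_sum fun i _ => ?_
    have := mul_le_mul_of_nonneg_right (hmemU i) (mul_nonneg (hk0 i) (hg'0 i).le)
    calc ϑ i * k i * g' i = ϑ i * (k i * g' i) := by ring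
    _ ≤ b * (k i * g' i) := this
  have hD0 : (0:ℝ) < D := by rw [hD]; positivity
  have hnum : (u*Q - v*P)^2 ≤ 4 * (D * (b*U)^2 * S) * Q^2 := by
    have e1 : u*Q - v*P = (u-v)*Q + v*(Q-P) := by ring
    have h1 : (u-v)^2 * Q^2 ≤ (D*(b*U)^2*S) * Q^2 :=
      mul_le_mul_of_nonneg_right hCS1 (sq_nonneg Q)
    have h2 : v^2 * (Q-P)^2 ≤ (b*Q)^2 * (D*U^2*S) :=
      mul_le_mul (pow_le_pow_left₀ hv0 hvQ 2) hCS2 (sq_nonneg _) (sq_nonneg _)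
    have step1 : (u*Q - v*P)^2 ≤ 2*((u-v)*Q)^2 + 2*(v*(Q-P))^2 := by
      nlinarith [sq_nonneg ((u-v)*Q - v*(Q-P))]
    have e4 : (b*Q)^2*(D*U^2*S) = (D*(b*U)^2*S)*Q^2 := by ring
    have e2 : ((u-v)*Q)^2 = (u-v)^2*Q^2 := by ring
    have e3 : (v*(Q-P))^2 = v^2*(Q-P)^2 := by ring
    linarith [step1, h1, h2, e4, e2, e3]
  have hΔ : u/P - v/Q = (u*Q - v*P)/(P*Q) := by field_simp
  have hΔ2 : (u/P - v/Q)^2 ≤ 4 * (D * (b*U)^2 * S) / L^2 := by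
    rw [hΔ]
    calc ((u*Q - v*P)/(P*Q))^2 = (u*Q-v*P)^2/(P^2*Q^2) := by rw [div_pow, mul_pow]
    _ ≤ (4*(D*(b*U)^2*S)*Q^2)/(P^2*Q^2) := by gcongr
    _ = 4*(D*(b*U)^2*S)/P^2 := by
        rw [mul_comm (P^2) (Q^2), ← div_div, mul_div_assoc, div_self (by positivity : Q^2 ≠ 0), mul_one]
    _ ≤ 4*(D*(b*U)^2*S)/L^2 := by
        have hX0 : 0 ≤ 4*(D*(b*U)^2*S) := by
          have := mul_nonneg (mul_nonneg hD0.le (sq_nonneg (b*U))) hS0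
          linarith
        exact div_le_div_of_nonneg_left hX0 (pow_pos hL 2) (pow_le_pow_left₀ hL.le hPL 2)
  -- rewrite U in terms of L
  have hUL : U = Real.exp (b-a) * (b/a)^y * L := by
    have he : Real.exp (b-a) * Real.exp (-b) = Real.exp (-a) := by
      rw [← Real.exp_add]; ring_nf
    have hay : a^y ≠ 0 := by positivity
    rw [hU', hL', div_pow, ← he]
    field_simp
  rw [hTg, hTg']
  have he2 : Real.exp (2*(b-a)) = Real.exp (b-a) * Real.exp (b-a) := by
    rw [← Real.exp_add]; ring_nf
  have hpw : ((b/a)^2)^y = ((b/a)^y)^2 := by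
    rw [← pow_mul, ← pow_mul, mul_comm]
  have main : 4*(D*(b*U)^2*S)/L^2 = 4*D*b^2*Real.exp (2*(b-a))*S*(((b/a)^2)^y) := by
    rw [hUL, he2, hpw]
    have hL0 : L ≠ 0 := hL.ne'
    field_simp
  have hpow : ((b/a)^2)^y ≤ (D^2)^y :=
    pow_le_pow_left₀ (sq_nonneg _) (pow_le_pow_left₀ (div_nonneg hb.le ha.le) hratio 2) y
  have c0 : 0 ≤ 4*D*b^2*Real.exp (2*(b-a))*S :=
    mul_nonneg (mul_nonneg (mul_nonneg (mul_nonneg (by norm_num : (0:ℝ) ≤ 4) hD0.le)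
      (sq_nonneg b)) (Real.exp_nonneg _)) hS0
  calc (u/P - v/Q)^2 ≤ 4*(D*(b*U)^2*S)/L^2 := hΔ2
  _ = 4*D*b^2*Real.exp (2*(b-a))*S*(((b/a)^2)^y) := main
  _ ≤ 4*D*b^2*Real.exp (2*(b-a))*S*((D^2)^y) := mul_le_mul_of_nonneg_left hpow c0

/-- the regret `∑_y (θ̂_g(y) − θ̂_{g'}(y))² p_{G*}(y)` is bounded by
`C ‖g − g'‖²` with `C = 4 d ϑ_d² e^{2(ϑ_d − ϑ_1)} ∫ e^{θ(d²−1)} dG*(θ)`. -/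
theorem regret_le_dist_sq (m : ℕ) (ϑ : Fin (m + 1) → ℝ)
    (hpos : ∀ i, 0 < ϑ i) (hmono : StrictMono ϑ)
    (g g' : Fin (m + 1) → ℝ)
    (hg0 : ∀ i, 0 ≤ g i) (hg1 : ∑ i, g i = 1)
    (hg'0 : ∀ i, 0 < g' i) (hg'1 : ∑ i, g' i = 1)
    (G : Measure ℝ) [IsProbabilityMeasure G] (hG : G (Set.Ioi (0 : ℝ))ᶜ = 0)
    (hratio : ϑ (Fin.last m) / ϑ 0 ≤ ((m : ℝ) + 1))
    (hI : (∫⁻ θ, ENNReal.ofReal (Real.exp (θ * (((m : ℝ) + 1) ^ 2 - 1))) ∂G) < ⊤) :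
    ∑' y : ℕ, (thetaHat ϑ g y - thetaHat ϑ g' y) ^ 2 * pmix G y
      ≤ (4 * ((m : ℝ) + 1) * (ϑ (Fin.last m)) ^ 2 *
            Real.exp (2 * (ϑ (Fin.last m) - ϑ 0)) *
            (∫⁻ θ, ENNReal.ofReal (Real.exp (θ * (((m : ℝ) + 1) ^ 2 - 1))) ∂G).toReal) *
          ∑ i, (g i - g' i) ^ 2 := by
  classical
  set D : ℝ := (m:ℝ) + 1 with hD
  have hD1 : (1:ℝ) ≤ D := by
    have : (0:ℝ) ≤ (m:ℝ) := Nat.cast_nonneg m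
    rw [hD]; linarith
  have hmeas : ∀ y : ℕ, Measurable fun θ : ℝ => ENNReal.ofReal (poissonK θ y) := by
    intro y
    apply Measurable.ennreal_ofReal
    unfold poissonK
    fun_prop
  have haepos : ∀ᵐ θ ∂G, 0 < θ := by
    rw [ae_iff]
    simpa [Set.compl_def] using hG
  have hsum_pk : ∀ (n : ℕ) {θ : ℝ}, 0 < θ →
      ∑ y ∈ Finset.range n, (D^2)^y * poissonK θ y ≤ Real.exp (θ*(D^2-1)) := by
    intro n θ hθ
    have h1 : ∀ y : ℕ, (D^2)^y * poissonK θ y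
        = Real.exp (-θ) * ((D^2*θ)^y / (Nat.factorial y)) := by
      intro y; unfold poissonK; rw [mul_pow]; ring
    have hDθ : 0 ≤ D^2*θ := mul_nonneg (sq_nonneg D) hθ.le
    calc ∑ y ∈ Finset.range n, (D^2)^y * poissonK θ y
        = Real.exp (-θ) * ∑ y ∈ Finset.range n, (D^2*θ)^y / (Nat.factorial y) := by
          rw [Finset.mul_sum]; exact Finset.sum_congr rfl fun y _ => h1 y
    _ ≤ Real.exp (-θ) * Real.exp (D^2*θ) :=
          mul_le_mul_of_nonneg_left (Real.sum_le_exp_of_nonneg hDθ n) (Real.exp_nonneg _)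
    _ = Real.exp (θ*(D^2-1)) := by rw [← Real.exp_add]; ring_nf
  set Itop := ∫⁻ θ, ENNReal.ofReal (Real.exp (θ*(D^2-1))) ∂G with hItop
  have hpknn : ∀ {θ : ℝ}, 0 < θ → ∀ y : ℕ, 0 ≤ poissonK θ y := by
    intro θ hθ y; unfold poissonK; positivity
  have hEsum : ∀ n : ℕ, ∑ y ∈ Finset.range n,
      ENNReal.ofReal ((D^2)^y) * ∫⁻ θ, ENNReal.ofReal (poissonK θ y) ∂G ≤ Itop := by
    intro n
    have hstep : ∀ y ∈ Finset.range n,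
        ENNReal.ofReal ((D^2)^y) * ∫⁻ θ, ENNReal.ofReal (poissonK θ y) ∂G
          = ∫⁻ θ, ENNReal.ofReal ((D^2)^y) * ENNReal.ofReal (poissonK θ y) ∂G :=
      fun y _ => (lintegral_const_mul _ (hmeas y)).symm
    rw [Finset.sum_congr rfl hstep,
      ← lintegral_finset_sum _ (fun y _ => (hmeas y).const_mul _)]
    refine lintegral_mono_ae (haepos.mono fun θ hθ => ?_)
    calc ∑ y ∈ Finset.range n, ENNReal.ofReal ((D^2)^y) * ENNReal.ofReal (poissonK θ y)
        = ENNReal.ofReal (∑ y ∈ Finset.range n, (D^2)^y * poissonK θ y) := by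
          rw [ENNReal.ofReal_sum_of_nonneg
            (fun y _ => mul_nonneg (by positivity) (hpknn hθ y))]
          exact Finset.sum_congr rfl fun y _ => (ENNReal.ofReal_mul (by positivity)).symm
    _ ≤ ENNReal.ofReal (Real.exp (θ*(D^2-1))) := ENNReal.ofReal_le_ofReal (hsum_pk n hθ)
  have hItop_ne : Itop ≠ ⊤ := hI.ne
  have hfin : ∀ y : ℕ, (∫⁻ θ, ENNReal.ofReal (poissonK θ y) ∂G) ≠ ⊤ := by
    intro y
    have h1 : ENNReal.ofReal ((D^2)^y) * ∫⁻ θ, ENNReal.ofReal (poissonK θ y) ∂G ≤ Itop :=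
      le_trans (Finset.single_le_sum
        (f := fun z => ENNReal.ofReal ((D^2)^z) * ∫⁻ θ, ENNReal.ofReal (poissonK θ z) ∂G)
        (fun i _ => zero_le) (Finset.self_mem_range_succ y)) (hEsum (y+1))
    have hone : (1:ℝ≥0∞) ≤ ENNReal.ofReal ((D^2)^y) :=
      ENNReal.one_le_ofReal.mpr (one_le_pow₀ (by nlinarith))
    have h2 : (∫⁻ θ, ENNReal.ofReal (poissonK θ y) ∂G)
        ≤ ENNReal.ofReal ((D^2)^y) * ∫⁻ θ, ENNReal.ofReal (poissonK θ y) ∂G :=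
      le_mul_of_one_le_left zero_le hone
    exact ne_top_of_le_ne_top hItop_ne (h2.trans h1)
  have series : ∀ n : ℕ, ∑ y ∈ Finset.range n, (D^2)^y * pmix G y ≤ Itop.toReal := by
    intro n
    have h2 : ∀ y ∈ Finset.range n, (D^2)^y * pmix G y
        = (ENNReal.ofReal ((D^2)^y) * ∫⁻ θ, ENNReal.ofReal (poissonK θ y) ∂G).toReal := by
      intro y _
      rw [ENNReal.toReal_mul, ENNReal.toReal_ofReal (by positivity)]
      rfl
    rw [Finset.sum_congr rfl h2,
      ← ENNReal.toReal_sum (fun y _ => ENNReal.mul_ne_top ENNReal.ofReal_ne_top (hfin y))]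
    exact ENNReal.toReal_mono hItop_ne (hEsum n)
  have key := fun y => diff_sq_le m ϑ hpos hmono g g' hg0 hg1 hg'0 hg'1 hratio y
  have hpm : ∀ y : ℕ, 0 ≤ pmix G y := fun y => ENNReal.toReal_nonneg
  refine Real.tsum_le_of_sum_range_le
    (fun y => mul_nonneg (sq_nonneg _) (hpm y)) ?_
  intro n
  set b : ℝ := ϑ (Fin.last m) with hb'
  set aa : ℝ := ϑ 0 with ha'
  set S : ℝ := ∑ i, (g i - g' i)^2 with hS'
  have hS0 : 0 ≤ S := Finset.sum_nonneg fun i _ => sq_nonneg _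
  have hD0 : (0:ℝ) < D := lt_of_lt_of_le one_pos hD1
  have hC0 : 0 ≤ 4*D*b^2*Real.exp (2*(b-aa))*S :=
    mul_nonneg (mul_nonneg (mul_nonneg (mul_nonneg (by norm_num : (0:ℝ) ≤ 4) hD0.le)
      (sq_nonneg b)) (Real.exp_nonneg _)) hS0
  calc ∑ y ∈ Finset.range n, (thetaHat ϑ g y - thetaHat ϑ g' y)^2 * pmix G y
      ≤ ∑ y ∈ Finset.range n, (4*D*b^2*Real.exp (2*(b-aa))*S) * ((D^2)^y * pmix G y) := by
        refine Finset.sum_le_sum fun y _ => ?_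
        have h := mul_le_mul_of_nonneg_right (key y) (hpm y)
        exact h.trans_eq (by ring)
  _ = (4*D*b^2*Real.exp (2*(b-aa))*S) * ∑ y ∈ Finset.range n, (D^2)^y * pmix G y :=
        (Finset.mul_sum _ _ _).symm
  _ ≤ (4*D*b^2*Real.exp (2*(b-aa))*S) * Itop.toReal :=
        mul_le_mul_of_nonneg_left (series n) hC0
  _ = (4*D*b^2*Real.exp (2*(b-aa))*Itop.toReal) * S := by ring
end
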